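/- Let n, k be positive integers and let μ ⊆ λ be partitions such that λ/μ is an n-border strip of weight k. Then λ/μ is a horizontal n-border strip of weight k if and only if the maximum of the lengths l(ρ) over all horizontal n-border strip chains (of any weight ρ) from μ to λ equals k. -/

import Mathlib

open MvPolynomial

namespace Pleth

/-- A partition: a weakly decreasing, finitely supported sequence of natural
numbers (0-indexed: `parts i` is the (i+1)-st part). -/
structure Partition where
  parts : ℕ → ℕ
  antitone : ∀ ⦃i j : ℕ⦄, i ≤ j → parts j ≤ parts i
  finite : (Function.support parts).Finite

namespace Partition

/-- The empty partition. -/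
def empty : Partition :=
  ⟨fun _ => 0, fun _ _ _ => le_rfl, by simp [Function.support]⟩

/-- The size `|λ|` of a partition. -/
noncomputable def size (p : Partition) : ℕ := ∑ᶠ i, p.parts i

/-- The length `ℓ(λ)`: the number of nonzero parts. -/
noncomputable def length (p : Partition) : ℕ := (Function.support p.parts).ncard

/-- Containment of partitions: `Sub μ λ` means `μ ⊆ λ`. -/
def Sub (p q : Partition) : Prop := ∀ i, p.parts i ≤ q.parts i

/-- The cells (boxes) of the Young diagram, 0-indexed: `(i, j)` with `j < λ_{i+1}`. -/
def cells (p : Partition) : Set (ℕ × ℕ) := {c | c.2 < p.parts c.1}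

end Partition

/-- The cells of the skew diagram `λ/μ`. -/
def skew (mu lam : Partition) : Set (ℕ × ℕ) := lam.cells \ mu.cells

/-- Two boxes are adjacent if they share an edge. -/
def Adj (a b : ℕ × ℕ) : Prop :=
  (a.1 = b.1 ∧ (a.2 + 1 = b.2 ∨ b.2 + 1 = a.2)) ∨
    (a.2 = b.2 ∧ (a.1 + 1 = b.1 ∨ b.1 + 1 = a.1))

/-- A set of boxes is connected if any two of its boxes can be joined by a path
of edge-adjacent boxes inside the set. -/
def IsConnectedSet (S : Set (ℕ × ℕ)) : Prop :=
  ∀ a ∈ S, ∀ b ∈ S, Relation.ReflTransGen (fun x y => y ∈ S ∧ Adj x y) a b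

/-- `S` contains no 2×2 block of boxes. -/
def No2x2 (S : Set (ℕ × ℕ)) : Prop :=
  ¬ ∃ i j : ℕ, (i, j) ∈ S ∧ (i + 1, j) ∈ S ∧ (i, j + 1) ∈ S ∧ (i + 1, j + 1) ∈ S

/-- `λ/μ` is a border strip of size `d`: `μ ⊆ λ`, it has exactly `d` boxes,
it is connected, and contains no 2×2 block. -/
def IsBorderStrip (mu lam : Partition) (d : ℕ) : Prop :=
  Partition.Sub mu lam ∧ (skew mu lam).ncard = d ∧
    IsConnectedSet (skew mu lam) ∧ No2x2 (skew mu lam)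

/-- The spin of a skew diagram: its number of nonempty rows minus 1. -/
noncomputable def spin (S : Set (ℕ × ℕ)) : ℕ := (Prod.fst '' S).ncard - 1

/-- `b` is the starting box of `S`: the box in its topmost nonempty row and,
within that row, rightmost column. -/
def IsStartBox (S : Set (ℕ × ℕ)) (b : ℕ × ℕ) : Prop :=
  b ∈ S ∧ (∀ c ∈ S, b.1 ≤ c.1) ∧ (∀ c ∈ S, c.1 = b.1 → c.2 ≤ b.2)

/-- `(λ/μ)↑`: the boxes `(r, c)` of `S` such that `(r-1, c)` is not in `S`. -/
def up (S : Set (ℕ × ℕ)) : Set (ℕ × ℕ) :=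
  {b | b ∈ S ∧ ∀ r : ℕ, r + 1 = b.1 → (r, b.2) ∉ S}

/-- `α` is an `n`-border strip chain of weight `τ` from `μ` to `λ`. -/
def IsChain (n : ℕ) (mu lam : Partition) (τ : List ℕ) (α : ℕ → Partition) : Prop :=
  α 0 = mu ∧ α τ.length = lam ∧
    ∀ i : Fin τ.length, IsBorderStrip (α i) (α (i + 1)) (τ.get i * n)

/-- `α` is a horizontal `n`-border strip chain of weight `τ` from `μ` to `λ`:
the starting box of each strip in the chain lies in `(λ/μ)↑`. -/
def IsHorizontalChain (n : ℕ) (mu lam : Partition) (τ : List ℕ) (α : ℕ → Partition) : Prop :=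
  IsChain n mu lam τ α ∧
    ∀ i : Fin τ.length, ∃ b, IsStartBox (skew (α i) (α (i + 1))) b ∧ b ∈ up (skew mu lam)

/-- `λ/μ` is an `n`-border strip of weight `k`. -/
def IsWeightStrip (n k : ℕ) (mu lam : Partition) : Prop :=
  ∃ (τ : List ℕ) (α : ℕ → Partition),
    (∀ t ∈ τ, 0 < t) ∧ τ.sum = k ∧ IsChain n mu lam τ α

/-- `λ/μ` is a horizontal `n`-border strip of weight `k`: there is a horizontal
`n`-border strip chain of weight `(1, …, 1)` (`k` ones) from `μ` to `λ`. -/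
def IsHorizontalWeightStrip (n k : ℕ) (mu lam : Partition) : Prop :=
  ∃ α : ℕ → Partition, IsHorizontalChain n mu lam (List.replicate k 1) α

/-- The sign of a chain of length `k`: the product of the signs
`(-1)^{spin}` of its strips. -/
noncomputable def chainSign (α : ℕ → Partition) (k : ℕ) : ℤ :=
  ∏ i ∈ Finset.range k, (-1 : ℤ) ^ spin (skew (α i) (α (i + 1)))

open scoped Classical in
/-- The matrix `M(λ/μ)` (of size `l × l`, with `μ` padded by zero parts):
entry `(i,j)` is `1` if `λ_i - i ≥ μ_j - j` and `n ∣ (λ_i - i) - (μ_j - j)`,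
and `0` otherwise. -/
noncomputable def Mmat (n : ℕ) (mu lam : Partition) (l : ℕ) : Matrix (Fin l) (Fin l) ℤ :=
  Matrix.of fun i j : Fin l =>
    if ((mu.parts j : ℤ) - (j : ℤ) ≤ (lam.parts i : ℤ) - (i : ℤ) ∧
        (n : ℤ) ∣ ((lam.parts i : ℤ) - (i : ℤ) - ((mu.parts j : ℤ) - (j : ℤ)))) then 1 else 0

/-- The matrix `A(λ/μ)`: entry `(i,j)` is `λ_i - i - μ_j + j`. -/
def Amat (mu lam : Partition) (l : ℕ) : Matrix (Fin l) (Fin l) ℤ :=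
  Matrix.of fun i j : Fin l =>
    (lam.parts i : ℤ) - (i : ℤ) - (mu.parts j : ℤ) + (j : ℤ)

/-- `h_r` for an integer index `r`, with `h_r = 0` for `r < 0`. -/
noncomputable def hInt (N : ℕ) (r : ℤ) : MvPolynomial (Fin N) ℚ :=
  if 0 ≤ r then hsymm (Fin N) ℚ r.toNat else 0

/-- `e_r` for an integer index `r`, with `e_r = 0` for `r < 0`. -/
noncomputable def eInt (N : ℕ) (r : ℤ) : MvPolynomial (Fin N) ℚ :=
  if 0 ≤ r then esymm (Fin N) ℚ r.toNat else 0

/-- The Schur polynomial of a partition, via the Jacobi–Trudi determinant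
`det(h_{λ_i - i + j})_{i,j=1}^{ℓ(λ)}`. -/
noncomputable def schur (N : ℕ) (p : Partition) : MvPolynomial (Fin N) ℚ :=
  Matrix.det (Matrix.of fun i j : Fin p.length =>
    hInt N ((p.parts i : ℤ) - (i : ℤ) + (j : ℤ)))

/-- `h_m(x₁ⁿ, …, x_Nⁿ)`, i.e. the plethysm `p_n ∘ h_m`. -/
noncomputable def hpow (N n m : ℕ) : MvPolynomial (Fin N) ℚ :=
  aeval (fun i : Fin N => (X i : MvPolynomial (Fin N) ℚ) ^ n) (hsymm (Fin N) ℚ m)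

/-- `e_k(x₁ⁿ, …, x_Nⁿ)`, i.e. up to sign the plethysm `p_n ∘ e_k`. -/
noncomputable def epow (N n k : ℕ) : MvPolynomial (Fin N) ℚ :=
  aeval (fun i : Fin N => (X i : MvPolynomial (Fin N) ℚ) ^ n) (esymm (Fin N) ℚ k)

/-- `z_λ` for `λ : Nat.Partition m`. -/
def zcoeff {m : ℕ} (P : Nat.Partition m) : ℕ :=
  ∏ i ∈ P.parts.toFinset, i ^ (P.parts.count i) * (P.parts.count i).factorial

/-- The plethysm `h_n ∘ h_m` in `N` variables: the complete homogeneous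
symmetric polynomial `h_n` evaluated at the family of all monomials of total
degree `m` in `x₁, …, x_N`. -/
noncomputable def hcomp (N n m : ℕ) : MvPolynomial (Fin N) ℚ :=
  aeval (fun d : (Finset.Nat.antidiagonalTuple N m : Finset (Fin N → ℕ)) =>
      ∏ i : Fin N, (X i : MvPolynomial (Fin N) ℚ) ^ (d.1 i))
    (hsymm (Finset.Nat.antidiagonalTuple N m : Finset (Fin N → ℕ)) ℚ n)

/-- The sum, over all chains `∅ = λ⁽⁰⁾ ⊆ λ⁽¹⁾ ⊆ … ⊆ λ⁽ˡ⁾` of partitions such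
that `λ⁽ⁱ⁾/λ⁽ⁱ⁻¹⁾` is a horizontal `L_i`-border strip of weight `m` for each
`i`, of `(∏ᵢ det M^{(L_i)}(λ⁽ⁱ⁾/λ⁽ⁱ⁻¹⁾)) · s_{λ⁽ˡ⁾}`. -/
noncomputable def chainExpansion (N m : ℕ) (L : List ℕ) : MvPolynomial (Fin N) ℚ :=
  ∑ᶠ c : {c : Fin (L.length + 1) → Partition //
      c 0 = Partition.empty ∧
      ∀ i : Fin L.length, IsHorizontalWeightStrip (L.get i) m (c i.castSucc) (c i.succ)},
    ((∏ i : Fin L.length,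
        Matrix.det (Mmat (L.get i) (c.1 i.castSucc) (c.1 i.succ) (c.1 i.succ).length) : ℤ) :
      MvPolynomial (Fin N) ℚ) * schur N (c.1 (Fin.last L.length))

end Pleth

namespace Pleth

lemma cells_subset {p q : Partition} (h : p.Sub q) : p.cells ⊆ q.cells :=
  fun c hc => lt_of_lt_of_le hc (h c.1)

lemma skew_union_eq {a b c : Partition} (hab : a.Sub b) (hbc : b.Sub c) :
    skew a c = skew a b ∪ skew b c := by
  ext x
  simp only [skew, Set.mem_diff, Set.mem_union]
  constructor
  · rintro ⟨hc, ha⟩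
    by_cases hb : x ∈ b.cells
    · exact Or.inl ⟨hb, ha⟩
    · exact Or.inr ⟨hc, hb⟩
  · rintro (⟨hb, ha⟩ | ⟨hc, hb⟩)
    · exact ⟨cells_subset hbc hb, ha⟩
    · exact ⟨hc, fun h => hb (cells_subset hab h)⟩

lemma skew_disjoint {a b c : Partition} :
    Disjoint (skew a b) (skew b c) := by
  rw [Set.disjoint_left]
  rintro x ⟨hb, _⟩ ⟨_, hnb⟩
  exact hnb hb

lemma chain_ncard (α : ℕ → Partition) :
    ∀ l, (∀ i < l, (α i).Sub (α (i+1)) ∧ (skew (α i) (α (i+1))).Finite) →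
      (α 0).Sub (α l) ∧ (skew (α 0) (α l)).Finite ∧
      (skew (α 0) (α l)).ncard = ∑ i ∈ Finset.range l, (skew (α i) (α (i+1))).ncard := by
  intro l
  induction l with
  | zero =>
    intro _
    exact ⟨fun i => le_rfl, by simp [skew], by simp [skew]⟩
  | succ l ih =>
    intro h
    obtain ⟨hsub, hfin, hcard⟩ := ih (fun i hi => h i (Nat.lt_succ_of_lt hi))
    obtain ⟨hsub', hfin'⟩ := h l (Nat.lt_succ_self l)
    have hu : skew (α 0) (α (l+1)) = skew (α 0) (α l) ∪ skew (α l) (α (l+1)) :=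
      skew_union_eq hsub hsub'
    refine ⟨fun i => (hsub i).trans (hsub' i), ?_, ?_⟩
    · rw [hu]; exact hfin.union hfin'
    · rw [hu, Set.ncard_union_eq skew_disjoint hfin hfin', hcard, Finset.sum_range_succ]

lemma chain_size {n : ℕ} (hn : 0 < n) {mu lam : Partition} {τ : List ℕ} {α : ℕ → Partition}
    (hpos : ∀ t ∈ τ, 0 < t) (hc : IsChain n mu lam τ α) :
    (skew mu lam).ncard = τ.sum * n := by
  obtain ⟨h0, hl, hs⟩ := hc
  have key : ∀ i < τ.length, (α i).Sub (α (i+1)) ∧ (skew (α i) (α (i+1))).Finite := by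
    intro i hi
    obtain ⟨hsub, hcard, _⟩ := hs ⟨i, hi⟩
    refine ⟨hsub, Set.finite_of_ncard_ne_zero ?_⟩
    rw [hcard]
    exact Nat.mul_ne_zero (hpos _ (τ.get_mem ⟨i, hi⟩)).ne' hn.ne'
  obtain ⟨-, -, hcard⟩ := chain_ncard α τ.length key
  rw [← h0, ← hl, hcard]
  have : ∀ i ∈ Finset.range τ.length,
      (skew (α i) (α (i+1))).ncard = (if h : i < τ.length then τ.get ⟨i, h⟩ * n else 0) := by
    intro i hi
    rw [Finset.mem_range] at hi
    rw [dif_pos hi]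
    exact (hs ⟨i, hi⟩).2.1
  have h2 : τ.sum = ∑ i : Fin τ.length, τ.get i := by
    conv_lhs => rw [← List.ofFn_get τ]
    rw [List.sum_ofFn]
  rw [Finset.sum_congr rfl this, ← Fin.sum_univ_eq_sum_range, h2, Finset.sum_mul]
  apply Finset.sum_congr rfl
  intro i _
  rw [dif_pos i.isLt]

lemma all_one_of_sum_eq_length : ∀ (ρ : List ℕ), (∀ t ∈ ρ, 0 < t) → ρ.sum = ρ.length →
    ∀ t ∈ ρ, t = 1 := by
  intro ρ
  induction ρ with
  | nil => intro _ _ t ht; simp at ht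
  | cons a l ih =>
    intro hpos hsum t ht
    have hl : l.length ≤ l.sum := List.length_le_sum_of_one_le l (fun i hi => hpos i (List.mem_cons_of_mem a hi))
    simp only [List.sum_cons, List.length_cons] at hsum
    have ha : 0 < a := hpos a List.mem_cons_self
    have ha1 : a = 1 := by omega
    have hls : l.sum = l.length := by omega
    rcases List.mem_cons.mp ht with rfl | ht'
    · exact ha1
    · exact ih (fun i hi => hpos i (List.mem_cons_of_mem a hi)) hls t ht'

end Pleth


open Pleth
/-- Corollary 2.3 (characterization of horizontal strips): if `λ/μ` is an
`n`-border strip of weight `k`, then `λ/μ` is a horizontal `n`-border strip of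
weight `k` iff the maximal length of a horizontal `n`-border strip chain from
`μ` to `λ` equals `k`. -/
theorem horizontal_iff_max_length (n k : ℕ) (hn : 0 < n) (hk : 0 < k)
    (mu lam : Partition) (hsub : mu.Sub lam) (hstrip : IsWeightStrip n k mu lam) :
    IsHorizontalWeightStrip n k mu lam ↔
      IsGreatest {l : ℕ | ∃ (ρ : List ℕ) (β : ℕ → Partition), (∀ r ∈ ρ, 0 < r) ∧
        IsHorizontalChain n mu lam ρ β ∧ ρ.length = l} k := by
  constructor
  · rintro ⟨α, hα⟩
    constructor
    · exact ⟨List.replicate k 1, α, by simp, hα, by simp⟩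
    · rintro l ⟨ρ, β, hpos, hchain, rfl⟩
      have h1 : (skew mu lam).ncard = ρ.sum * n := chain_size hn hpos hchain.1
      obtain ⟨τ, γ, hτpos, hτsum, hτchain⟩ := hstrip
      have h2 : (skew mu lam).ncard = k * n := by
        rw [chain_size hn hτpos hτchain, hτsum]
      have hsum : ρ.sum = k := Nat.eq_of_mul_eq_mul_right hn (h1 ▸ h2 ▸ rfl)
      calc ρ.length ≤ ρ.sum := List.length_le_sum_of_one_le ρ hpos
        _ = k := hsum
  · rintro ⟨⟨ρ, β, hpos, hchain, hlen⟩, -⟩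
    have h1 : (skew mu lam).ncard = ρ.sum * n := chain_size hn hpos hchain.1
    obtain ⟨τ, γ, hτpos, hτsum, hτchain⟩ := hstrip
    have h2 : (skew mu lam).ncard = k * n := by
      rw [chain_size hn hτpos hτchain, hτsum]
    have hsum : ρ.sum = k := Nat.eq_of_mul_eq_mul_right hn (h1 ▸ h2 ▸ rfl)
    have hone : ∀ t ∈ ρ, t = 1 :=
      all_one_of_sum_eq_length ρ hpos (by rw [hsum, hlen])
    have hrep : ρ = List.replicate k 1 := List.eq_replicate_iff.mpr ⟨hlen, hone⟩
    exact ⟨β, hrep ▸ hchain⟩
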